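/- Let A₁ = diag(cos α, cos β) and A₂ = [[0, sin β],[sin α, 0]] be the Kraus operators of a rank-2 qubit channel Λ₂. Then tr(C²) − tr(Λ₂(I)²) = 2·cos(2β)·cos(2α), where C = vec(A₁)vec(A₁)* + vec(A₂)vec(A₂)* and Λ₂(I) = A₁A₁* + A₂A₂*. Hence the antidegradability condition tr(Λ₂(I)²) ≥ tr(C²) (since det C = 0) holds if and only if cos(2α)·cos(2β) ≤ 0. -/

import Mathlib

open Matrix

/-- `vec` stacks the columns of a 2×2 real matrix into ℝ⁴ (as (column, row) pairs). -/
def vec (A : Matrix (Fin 2) (Fin 2) ℝ) : Fin 2 × Fin 2 → ℝ :=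
  fun p => A p.2 p.1

theorem stmt_5 (α β : ℝ) :
    let A₁ : Matrix (Fin 2) (Fin 2) ℝ := !![Real.cos α, 0; 0, Real.cos β]
    let A₂ : Matrix (Fin 2) (Fin 2) ℝ := !![0, Real.sin β; Real.sin α, 0]
    let C : Matrix (Fin 2 × Fin 2) (Fin 2 × Fin 2) ℝ :=
      Matrix.vecMulVec (_root_.vec A₁) (_root_.vec A₁) + Matrix.vecMulVec (_root_.vec A₂) (_root_.vec A₂)
    let L : Matrix (Fin 2) (Fin 2) ℝ := A₁ * A₁ᴴ + A₂ * A₂ᴴ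
    (C * C).trace - (L * L).trace = 2 * Real.cos (2*β) * Real.cos (2*α) ∧
    ((L * L).trace ≥ (C * C).trace ↔ Real.cos (2*α) * Real.cos (2*β) ≤ 0) := by
  intro A₁ A₂ C L
  have hC : (C * C).trace - (L * L).trace = 2 * Real.cos (2*β) * Real.cos (2*α) := by
    simp only [C, L, A₁, A₂, Matrix.trace, Matrix.diag, Matrix.mul_apply, Matrix.add_apply,
      Matrix.vecMulVec_apply, _root_.vec, Fintype.sum_prod_type, Fin.sum_univ_succ, Fin.sum_univ_zero,
      Matrix.conjTranspose_apply, star_trivial]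
    simp [Matrix.cons_val_zero, Matrix.cons_val_one, Real.cos_two_mul, Real.sin_sq]
    nlinarith [Real.sin_sq_add_cos_sq α, Real.sin_sq_add_cos_sq β, sq_nonneg (Real.cos α), sq_nonneg (Real.cos β)]
  refine ⟨hC, ?_⟩
  constructor
  · intro h; nlinarith [hC]
  · intro h; nlinarith [hC]
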